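/- arXiv:1908.04661 — 2 statements merged into one kernel-verified Lean document; each statement's English description precedes it below -/
import Mathlib

section
/- For every ξ ∈ ℝⁿ, h > 0 and 0 < α < 1/2, the Clifford-vector-valued symbol z_{h,α}(ξ) = Σ_{j=1}^n [ -i e_j (sin((1-α)hξ_j) + sin(αhξ_j))/h + e_{n+j} (cos(αhξ_j) - cos((1-α)hξ_j))/h ] satisfies z_{h,α}(ξ)² = d_h(ξ)²·1, where d_h(ξ)² = (4/h²) Σ_{j=1}^n sin²(hξ_j/2). -/
/-- In the complexified Clifford algebra `ℂ ⊗ Cℓ_{n,n}`, generated by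
elements `e j` (with `e j e k + e k e j = -2δ_{jk}`), `f j` (with
`f j f k + f k f j = 2δ_{jk}`) and `e j f k + f k e j = 0`, the symbol
`z_{h,α}(ξ) = Σ_j [-i e_j (sin((1-α)hξ_j)+sin(αhξ_j))/h + f_j (cos(αhξ_j)-cos((1-α)hξ_j))/h]`
squares to the scalar `d_h(ξ)² = (4/h²) Σ_j sin²(hξ_j/2)`. -/
theorem clifford_symbol_sq {n : ℕ} {A : Type*} [Ring A] [Algebra ℂ A]
    (e f : Fin n → A)
    (hee : ∀ j k, e j * e k + e k * e j = if j = k then (-2 : A) else 0)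
    (hef : ∀ j k, e j * f k + f k * e j = 0)
    (hff : ∀ j k, f j * f k + f k * f j = if j = k then (2 : A) else 0)
    (ξ : Fin n → ℝ) (h α : ℝ) (hh : 0 < h) (hα0 : 0 < α) (hα : α < 1 / 2) :
    (∑ j, ((-Complex.I * (((Real.sin ((1 - α) * h * ξ j) + Real.sin (α * h * ξ j)) / h : ℝ) : ℂ)) • e j
        + (((Real.cos (α * h * ξ j) - Real.cos ((1 - α) * h * ξ j)) / h : ℝ) : ℂ) • f j)) ^ 2
      = (((4 / h ^ 2 * ∑ j, Real.sin (h * ξ j / 2) ^ 2 : ℝ)) : ℂ) • (1 : A) := by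
  set s : Fin n → ℝ := fun j => (Real.sin ((1 - α) * h * ξ j) + Real.sin (α * h * ξ j)) / h with hs
  set c : Fin n → ℝ := fun j => (Real.cos (α * h * ξ j) - Real.cos ((1 - α) * h * ξ j)) / h with hc
  set x : Fin n → ℂ := fun j => -Complex.I * (s j : ℂ) with hx
  set y : Fin n → ℂ := fun j => ((c j : ℝ) : ℂ) with hy
  set a : Fin n → A := fun j => x j • e j + y j • f j with ha
  have key : ∀ j k, a j * a k + a k * a j
      = if j = k then (((s j)^2 + (c j)^2 : ℝ) : ℂ) • (2 : A) else 0 := by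
    intro j k
    have expand : a j * a k + a k * a j
        = (x j * x k) • (e j * e k + e k * e j)
          + (x j * y k) • (e j * f k + f k * e j)
          + (x k * y j) • (e k * f j + f j * e k)
          + (y j * y k) • (f j * f k + f k * f j) := by
      simp only [ha, add_mul, mul_add, smul_mul_assoc, mul_smul_comm, smul_smul, smul_add]
      module
    rw [expand, hee, hef, hef, hff]
    by_cases hjk : j = k
    · subst hjk
      simp only [eq_self_iff_true, if_true, smul_zero, add_zero, zero_add]
      have hxx : x j * x j = -((s j : ℂ))^2 := by
        rw [show x j * x j = Complex.I^2 * (s j : ℂ)^2 by rw [hx]; ring, Complex.I_sq]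
        ring
      rw [hxx, neg_smul, smul_neg, neg_neg]
      rw [show y j * y j = ((c j : ℂ))^2 by rw [hy]; ring]
      rw [← add_smul]
      congr 1
      push_cast
      ring
    · simp [hjk]
  have hsq : (∑ j, a j) ^ 2 = ∑ j, ∑ k, a j * a k := by
    rw [sq, Finset.sum_mul_sum]
  have hswap : (∑ j, ∑ k, a j * a k) = ∑ j, ∑ k, a k * a j := by
    rw [Finset.sum_comm]
  have h2 : (2 : ℂ) • (∑ j, a j) ^ 2
      = ∑ j, ∑ k, (a j * a k + a k * a j) := by
    rw [hsq, two_smul]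
    nth_rewrite 2 [hswap]
    simp [← Finset.sum_add_distrib]
  rw [Finset.sum_congr rfl (fun j _ => Finset.sum_congr rfl (fun k _ => key j k))] at h2
  simp only [Finset.sum_ite_eq, Finset.mem_univ, if_true] at h2
  have trig : ∀ j, (s j)^2 + (c j)^2 = 4 / h^2 * Real.sin (h * ξ j / 2) ^ 2 := by
    intro j
    have hA := Real.sin_sq_add_cos_sq ((1 - α) * h * ξ j)
    have hB := Real.sin_sq_add_cos_sq (α * h * ξ j)
    have hAB : Real.cos ((1 - α) * h * ξ j + α * h * ξ j)
        = Real.cos ((1 - α) * h * ξ j) * Real.cos (α * h * ξ j)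
          - Real.sin ((1 - α) * h * ξ j) * Real.sin (α * h * ξ j) := Real.cos_add _ _
    have hsum : (1 - α) * h * ξ j + α * h * ξ j = h * ξ j := by ring
    rw [hsum] at hAB
    have hhalf : Real.sin (h * ξ j / 2)^2 = (1 - Real.cos (h * ξ j))/2 := by
      have h1 := Real.cos_two_mul (h * ξ j / 2)
      have h2 := Real.sin_sq_add_cos_sq (h * ξ j / 2)
      have h3 : 2 * (h * ξ j / 2) = h * ξ j := by ring
      rw [h3] at h1
      nlinarith
    have hh2 : h^2 ≠ 0 := by positivity
    rw [hs, hc, hhalf]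
    field_simp
    nlinarith [hA, hB, hAB]
  have hsumr : (∑ j, ((s j)^2 + (c j)^2 : ℝ)) = 4 / h^2 * ∑ j, Real.sin (h * ξ j / 2)^2 := by
    rw [Finset.mul_sum]
    exact Finset.sum_congr rfl fun j _ => trig j
  have h2A : (2 : A) = (2 : ℂ) • (1 : A) := by
    rw [two_smul, one_add_one_eq_two]
  have hfinal : (∑ j, ((((s j)^2 + (c j)^2 : ℝ)) : ℂ) • (2 : A))
      = (2 : ℂ) • ((((4 / h ^ 2 * ∑ j, Real.sin (h * ξ j / 2) ^ 2 : ℝ)) : ℂ) • (1 : A)) := by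
    rw [← Finset.sum_smul, h2A, smul_smul, smul_smul, mul_comm]
    congr 2
    norm_cast
  rw [hfinal] at h2
  have := congrArg (fun z => ((2:ℂ)⁻¹) • z) h2
  simpa [smul_smul] using this
end

section
/- Convergence criterion for generalized Wright series (case p = 0, q = 1): the series ₀Ψ₁[ — ; (b, β) | λ ] = Σ_{m≥0} λ^m/(m! Γ(b + β m)) converges absolutely for every λ ∈ ℂ whenever β > -1. -/
open Complex Real Filter Finset MeasureTheory Topology

-- Lemma A
lemma norm_cGamma_le {s : ℂ} (hs : 0 < s.re) : ‖Complex.Gamma s‖ ≤ Real.Gamma s.re := by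
  rw [Complex.Gamma_eq_integral hs, Real.Gamma_eq_integral hs, Complex.GammaIntegral]
  refine le_trans (norm_integral_le_integral_norm _) (le_of_eq ?_)
  refine MeasureTheory.setIntegral_congr_fun measurableSet_Ioi (fun x hx => ?_)
  simp only [norm_mul, Complex.norm_real, Real.norm_eq_abs, abs_of_pos (Real.exp_pos _)]
  rw [Complex.norm_cpow_eq_rpow_re_of_pos hx]
  simp

-- Lemma B
lemma norm_sin_le (z : ℂ) : ‖Complex.sin z‖ ≤ Real.exp |z.im| := by
  rw [Complex.sin, norm_div, norm_mul, Complex.norm_I, mul_one]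
  have h1 : ‖Complex.exp (-z * Complex.I)‖ ≤ Real.exp |z.im| := by
    rw [Complex.norm_exp]
    exact Real.exp_le_exp.2 (by simp; exact le_abs_self _)
  have h2 : ‖Complex.exp (z * Complex.I)‖ ≤ Real.exp |z.im| := by
    rw [Complex.norm_exp]
    exact Real.exp_le_exp.2 (by simp; exact neg_le_abs _)
  calc ‖Complex.exp (-z * Complex.I) - Complex.exp (z * Complex.I)‖ / ‖(2:ℂ)‖
      ≤ (Real.exp |z.im| + Real.exp |z.im|) / 2 := by
        rw [Complex.norm_ofNat]
        gcongr
        exact (norm_sub_le _ _).trans (add_le_add h1 h2)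
    _ = Real.exp |z.im| := by ring

-- Lemma C : log-convexity step
lemma rGamma_add_le {x γ : ℝ} (hx : 0 < x) (hγ : 0 < γ) (hγ1 : γ < 1) :
    Real.Gamma (x + γ) ≤ Real.Gamma x * x ^ γ := by
  have h := Real.Gamma_mul_add_mul_le_rpow_Gamma_mul_rpow_Gamma hx
    (by linarith : (0:ℝ) < x + 1) (by linarith : 0 < 1 - γ) hγ (by ring)
  have e1 : (1 - γ) * x + γ * (x + 1) = x + γ := by ring
  rw [e1] at h
  refine h.trans (le_of_eq ?_)
  rw [Real.Gamma_add_one hx.ne',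
    Real.mul_rpow (le_of_lt hx) (Real.Gamma_nonneg_of_nonneg hx.le),
    ← mul_assoc, mul_comm (Real.Gamma x ^ (1-γ)) (x ^ γ), mul_assoc,
    ← Real.rpow_add (Real.Gamma_pos_of_pos hx)]
  norm_num
  ring

-- Lemma R : reflection bound
lemma norm_inv_cGamma_le {z : ℂ} (hz : z.re < 0) :
    ‖(Complex.Gamma z)⁻¹‖ ≤ Real.exp (π * |z.im|) * Real.Gamma (1 - z.re) / π := by
  have hre : 0 < (1 - z).re := by simp [Complex.sub_re]; linarith
  have hRHS : 0 ≤ Real.exp (π * |z.im|) * Real.Gamma (1 - z.re) / π := by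
    apply div_nonneg _ Real.pi_pos.le
    exact mul_nonneg (Real.exp_pos _).le (Real.Gamma_nonneg_of_nonneg (by linarith))
  by_cases h : Complex.Gamma z = 0
  · rw [h]; simpa using hRHS
  have hsin : Complex.sin (π * z) ≠ 0 := by
    intro hs
    rw [Complex.sin_eq_zero_iff] at hs
    obtain ⟨k, hk⟩ := hs
    have hπ : (π : ℂ) ≠ 0 := Complex.ofReal_ne_zero.2 Real.pi_ne_zero
    have hzk : z = (k : ℂ) := mul_left_cancel₀ hπ (by rw [hk]; ring)
    have hkre : (k:ℝ) < 0 := by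
      have := hz; rw [hzk] at this; simpa using this
    have hk0 : k < 0 := by exact_mod_cast hkre
    set n : ℕ := (-k).toNat with hn
    have hnk : (n : ℤ) = -k := Int.toNat_of_nonneg (by omega)
    have hzn : z = -(n : ℂ) := by
      rw [hzk]
      have h' : ((-k : ℤ) : ℂ) = ((n : ℤ) : ℂ) := by rw [hnk]
      push_cast at h'
      linear_combination -h'
    rw [hzn] at h
    exact h (Complex.Gamma_neg_nat_eq_zero n)
  -- reflection
  have hrefl := Complex.Gamma_mul_Gamma_one_sub z
  have hinv : (Complex.Gamma z)⁻¹ = Complex.Gamma (1 - z) * Complex.sin (π * z) / π := by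
    have hπ : (π : ℂ) ≠ 0 := Complex.ofReal_ne_zero.2 Real.pi_ne_zero
    rw [eq_div_iff hsin] at hrefl
    field_simp
    rw [mul_comm (π:ℂ) z] at hrefl
    linear_combination -hrefl
  rw [hinv, norm_div, norm_mul]
  have h1 : ‖Complex.Gamma (1 - z)‖ ≤ Real.Gamma (1 - z.re) := by
    have := norm_cGamma_le hre
    simpa using this
  have h2 : ‖Complex.sin ((π:ℂ) * z)‖ ≤ Real.exp (π * |z.im|) := by
    have := norm_sin_le ((π:ℂ) * z)
    have him : ((π:ℂ) * z).im = π * z.im := by simp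
    rw [him] at this
    refine this.trans (le_of_eq ?_)
    rw [abs_mul, abs_of_pos Real.pi_pos]
  have h3 : ‖(π : ℂ)‖ = π := by
    rw [Complex.norm_real, Real.norm_eq_abs, abs_of_pos Real.pi_pos]
  rw [h3]
  rw [div_le_div_iff_of_pos_right Real.pi_pos]
  calc ‖Complex.Gamma (1-z)‖ * ‖Complex.sin ((π:ℂ)*z)‖
      ≤ Real.Gamma (1 - z.re) * Real.exp (π * |z.im|) :=
        mul_le_mul h1 h2 (norm_nonneg _) (Real.Gamma_nonneg_of_nonneg (by linarith))
    _ = Real.exp (π * |z.im|) * Real.Gamma (1 - z.re) := by ring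

-- recurrence
lemma cGamma_add_nat (w : ℂ) (hw : w.im ≠ 0) (n : ℕ) :
    Complex.Gamma (w + n) = Complex.Gamma w * ∏ k ∈ Finset.range n, (w + k) := by
  induction n with
  | zero => simp
  | succ n ih =>
    have hne : w + (n:ℂ) ≠ 0 := by
      intro h0
      apply hw
      have := congrArg Complex.im h0
      simpa using this
    have he : w + ((n+1 : ℕ):ℂ) = (w + n) + 1 := by push_cast; ring
    rw [he, Complex.Gamma_add_one _ hne, ih, Finset.prod_range_succ]
    ring

lemma summable_of_eventually_le {f g : ℕ → ℝ} (hf : ∀ n, 0 ≤ f n)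
    (h : ∀ᶠ n in atTop, f n ≤ g n) (hg : Summable g) : Summable f := by
  obtain ⟨N, hN⟩ := eventually_atTop.1 h
  rw [← summable_nat_add_iff N]
  exact Summable.of_nonneg_of_le (fun n => hf _)
    (fun n => hN _ (Nat.le_add_left N n)) ((summable_nat_add_iff N).2 hg)

/-- the generalized Wright series
`₀Ψ₁[ — ; (b,β) | λ ] = Σ_{m≥0} λ^m/(m! Γ(b+βm))` converges absolutely for every
`λ ∈ ℂ` whenever `β > -1`. -/
theorem wright01_summable (b : ℂ) (β : ℝ) (hβ : β > -1) (lam : ℂ) :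
    Summable (fun m : ℕ =>
      ‖lam ^ m / ((Nat.factorial m : ℂ) * Complex.Gamma (b + (β : ℂ) * m))‖) := by
  have key : ∀ m : ℕ, ‖lam ^ m / ((Nat.factorial m : ℂ) * Complex.Gamma (b + (β : ℂ) * m))‖
      = ‖lam‖ ^ m / (Nat.factorial m : ℝ) * ‖(Complex.Gamma (b + (β : ℂ) * m))⁻¹‖ := by
    intro m
    rw [div_eq_mul_inv, mul_inv, norm_mul, norm_mul, norm_inv, norm_pow,
      Complex.norm_natCast, div_eq_mul_inv, mul_assoc]
  rw [summable_congr key]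
  have hre : ∀ m : ℕ, (b + (β : ℂ) * m).re = b.re + β * m := by
    intro m; simp
  have him : ∀ m : ℕ, (b + (β : ℂ) * m).im = b.im := by
    intro m; simp
  have hfnonneg : ∀ m : ℕ, 0 ≤ ‖lam‖ ^ m / (Nat.factorial m : ℝ)
      * ‖(Complex.Gamma (b + (β : ℂ) * m))⁻¹‖ := fun m => by positivity
  rcases lt_or_ge β 0 with hneg | hpos
  · -- case -1 < β < 0
    set γ : ℝ := -β with hγdef
    have hγ0 : 0 < γ := by simp only [hγdef]; linarith
    have hγ1 : γ < 1 := by simp only [hγdef]; linarith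
    set c : ℝ := 1 - b.re with hcdef
    set E : ℝ := Real.exp (π * |b.im|) / π with hEdef
    have hEpos : 0 < E := div_pos (Real.exp_pos _) Real.pi_pos
    set g : ℕ → ℝ := fun m => E * (‖lam‖ ^ m / (Nat.factorial m : ℝ)) * Real.Gamma (c + γ * m)
      with hgdef
    -- eventual facts
    have hev1 : ∀ᶠ m : ℕ in atTop, (1:ℝ) ≤ c + γ * m := by
      rw [eventually_atTop]
      refine ⟨⌈(1 - c)/γ⌉₊, fun m hm => ?_⟩
      have h1 : (1 - c)/γ ≤ (⌈(1 - c)/γ⌉₊ : ℝ) := Nat.le_ceil _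
      have h2 : ((⌈(1 - c)/γ⌉₊ : ℕ) : ℝ) ≤ (m : ℝ) := Nat.cast_le.2 hm
      have := (div_le_iff₀ hγ0).1 (h1.trans h2)
      linarith
    have hev2 : ∀ᶠ m : ℕ in atTop, c + γ * m ≤ (m : ℝ) := by
      rw [eventually_atTop]
      refine ⟨⌈c/(1-γ)⌉₊, fun m hm => ?_⟩
      have h1 : c/(1-γ) ≤ (⌈c/(1-γ)⌉₊ : ℝ) := Nat.le_ceil _
      have h2 : ((⌈c/(1-γ)⌉₊ : ℕ) : ℝ) ≤ (m : ℝ) := Nat.cast_le.2 hm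
      have := (div_le_iff₀ (by linarith : (0:ℝ) < 1 - γ)).1 (h1.trans h2)
      nlinarith
    have hev3 : ∀ᶠ m : ℕ in atTop, ‖lam‖ * (m : ℝ) ^ (γ - 1) < 1/2 := by
      have hrp : Tendsto (fun x : ℝ => x ^ (γ - 1)) atTop (𝓝 0) := by
        have := tendsto_rpow_neg_atTop (by linarith : (0:ℝ) < 1 - γ)
        simpa [neg_sub] using this
      have h2 := (hrp.comp tendsto_natCast_atTop_atTop).const_mul ‖lam‖
      rw [mul_zero] at h2
      exact h2.eventually (gt_mem_nhds (by norm_num : (0:ℝ) < 1/2))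
    have hev4 : ∀ᶠ m : ℕ in atTop, (1:ℝ) ≤ (m : ℝ) := by
      rw [eventually_atTop]
      exact ⟨1, fun m hm => by exact_mod_cast hm⟩
    have hgsum : Summable g := by
      apply summable_of_ratio_norm_eventually_le (r := 1/2) (by norm_num)
      filter_upwards [hev1, hev2, hev3, hev4] with m h1 h2 h3 h4
      have hcm : 0 < c + γ * m := by linarith
      have hΓpos : 0 < Real.Gamma (c + γ * m) := Real.Gamma_pos_of_pos hcm
      have hsucc : c + γ * ((m+1 : ℕ) : ℝ) = (c + γ * m) + γ := by push_cast; ring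
      have hΓpos' : 0 < Real.Gamma (c + γ * ((m+1:ℕ):ℝ)) := by
        rw [hsucc]; exact Real.Gamma_pos_of_pos (by linarith)
      have hgm : 0 ≤ g m := by
        simp only [hgdef]; positivity
      have hgm' : 0 ≤ g (m+1) := by
        simp only [hgdef]
        push_cast
        exact mul_nonneg (by positivity) (by push_cast at hΓpos'; linarith)
      rw [Real.norm_eq_abs, Real.norm_eq_abs, _root_.abs_of_nonneg hgm, _root_.abs_of_nonneg hgm']
      have hfac : ((Nat.factorial (m+1) : ℕ) : ℝ) = ((m:ℝ)+1) * (Nat.factorial m : ℝ) := by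
        rw [Nat.factorial_succ]; push_cast; ring
      have hratio : ‖lam‖ * (c + γ * m) ^ γ / ((m:ℝ)+1) ≤ 1/2 := by
        have e1 : (c + γ * m) ^ γ ≤ (m:ℝ) ^ γ :=
          Real.rpow_le_rpow hcm.le h2 hγ0.le
        have e2 : (m:ℝ) ^ γ / ((m:ℝ)+1) ≤ (m:ℝ) ^ (γ - 1) := by
          rw [Real.rpow_sub (by linarith : (0:ℝ) < (m:ℝ)), Real.rpow_one,
            div_le_div_iff₀ (by linarith) (by linarith)]
          nlinarith [Real.rpow_nonneg (show (0:ℝ) ≤ (m:ℝ) by linarith) γ]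
        calc ‖lam‖ * (c + γ * m) ^ γ / ((m:ℝ)+1)
            ≤ ‖lam‖ * (m:ℝ) ^ γ / ((m:ℝ)+1) :=
              div_le_div_of_nonneg_right
                (mul_le_mul_of_nonneg_left e1 (norm_nonneg lam)) (by linarith)
          _ = ‖lam‖ * ((m:ℝ) ^ γ / ((m:ℝ)+1)) := by ring
          _ ≤ ‖lam‖ * (m:ℝ) ^ (γ - 1) := mul_le_mul_of_nonneg_left e2 (norm_nonneg lam)
          _ ≤ 1/2 := h3.le
      calc g (m+1) = E * (‖lam‖ ^ (m+1) / (Nat.factorial (m+1) : ℝ))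
            * Real.Gamma ((c + γ * m) + γ) := by rw [hgdef]; push_cast [hsucc]; ring_nf
        _ ≤ E * (‖lam‖ ^ (m+1) / (Nat.factorial (m+1) : ℝ))
            * (Real.Gamma (c + γ * m) * (c + γ * m) ^ γ) := by
            have h := rGamma_add_le hcm hγ0 hγ1
            gcongr
        _ = g m * (‖lam‖ * (c + γ * m) ^ γ / ((m:ℝ)+1)) := by
            rw [hgdef, hfac]
            have : (Nat.factorial m : ℝ) ≠ 0 := by positivity
            field_simp
            ring
        _ ≤ g m * (1/2) := by
            apply mul_le_mul_of_nonneg_left hratio hgm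
        _ = 1/2 * g m := by ring
    apply summable_of_eventually_le hfnonneg ?_ hgsum
    have hev0 : ∀ᶠ m : ℕ in atTop, (b + (β:ℂ) * m).re < 0 := by
      rw [eventually_atTop]
      refine ⟨⌈(b.re + 1)/γ⌉₊, fun m hm => ?_⟩
      have h1 : (b.re + 1)/γ ≤ (⌈(b.re + 1)/γ⌉₊ : ℝ) := Nat.le_ceil _
      have h2 : ((⌈(b.re + 1)/γ⌉₊ : ℕ) : ℝ) ≤ (m : ℝ) := Nat.cast_le.2 hm
      have := (div_le_iff₀ hγ0).1 (h1.trans h2)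
      rw [hre]
      simp only [hγdef] at this
      linarith
    filter_upwards [hev0] with m h0
    have hb := norm_inv_cGamma_le h0
    rw [hre, him] at hb
    have harg : 1 - (b.re + β * m) = c + γ * m := by
      simp only [hcdef, hγdef]; ring
    rw [harg] at hb
    calc ‖lam‖ ^ m / (Nat.factorial m : ℝ) * ‖(Complex.Gamma (b + (β:ℂ)*m))⁻¹‖
        ≤ ‖lam‖ ^ m / (Nat.factorial m : ℝ)
          * (Real.exp (π * |b.im|) * Real.Gamma (c + γ * m) / π) := by
          gcongr
      _ = g m := by rw [hgdef, hEdef]; ring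
  · rcases eq_or_lt_of_le hpos with h0 | hposs
    · -- β = 0
      subst h0
      simp only [Complex.ofReal_zero, zero_mul, add_zero]
      exact (Real.summable_pow_div_factorial ‖lam‖).mul_right _
    · by_cases hbim : b.im = 0
      · -- β > 0, b real
        apply summable_of_eventually_le hfnonneg ?_ (Real.summable_pow_div_factorial ‖lam‖)
        rw [eventually_atTop]
        refine ⟨⌈(2 - b.re)/β⌉₊, fun m hm => ?_⟩
        have h1 : (2 - b.re)/β ≤ (⌈(2 - b.re)/β⌉₊ : ℝ) := Nat.le_ceil _
        have h2 : ((⌈(2 - b.re)/β⌉₊ : ℕ) : ℝ) ≤ (m : ℝ) := Nat.cast_le.2 hm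
        have hrge : 2 ≤ b.re + β * m := by
          have := (div_le_iff₀ hposs).1 (h1.trans h2)
          linarith
        have hbeq : b + (β:ℂ) * m = ((b.re + β * m : ℝ) : ℂ) := by
          apply Complex.ext
          · simp
          · simp [hbim]
        rw [hbeq, Complex.Gamma_ofReal]
        have h1' : (1:ℝ) ≤ Real.Gamma (b.re + β * m) := by
          have := Real.Gamma_strictMonoOn_Ici.monotoneOn (Set.mem_Ici.2 (le_refl (2:ℝ)))
            (Set.mem_Ici.2 hrge) hrge
          rwa [Real.Gamma_two] at this
        have hnorm : ‖((Real.Gamma (b.re + β * m) : ℝ) : ℂ)⁻¹‖ ≤ 1 := by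
          rw [norm_inv, Complex.norm_real, Real.norm_eq_abs,
            _root_.abs_of_pos (by linarith : (0:ℝ) < Real.Gamma (b.re + β * m))]
          exact inv_le_one_of_one_le₀ h1'
        calc ‖lam‖ ^ m / (Nat.factorial m : ℝ) * ‖((Real.Gamma (b.re + β * m) : ℝ) : ℂ)⁻¹‖
            ≤ ‖lam‖ ^ m / (Nat.factorial m : ℝ) * 1 := by
              gcongr
          _ = ‖lam‖ ^ m / (Nat.factorial m : ℝ) := mul_one _
      · -- β > 0, b.im ≠ 0 : strip argument
        set N : ℕ := ⌈b.re⌉₊ + 1 with hN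
        set B : ℕ := ⌈β⌉₊ with hB
        set δ : ℝ := min |b.im| 1 with hδ
        have hδ0 : 0 < δ := lt_min (abs_pos.2 hbim) one_pos
        have hδ1 : δ ≤ 1 := min_le_right _ _
        have h1le : (1:ℝ) ≤ δ⁻¹ := (one_le_inv₀ hδ0).2 hδ1
        have hbre : b.re ≤ ((N:ℝ) - 1) := by
          rw [hN]; push_cast
          have := Nat.le_ceil b.re
          linarith
        set K : ℝ := (N:ℝ) + 2 - b.re with hK
        have hK2 : 2 ≤ K := by rw [hK]; linarith
        set A : ℝ := Real.exp (π * |b.im|) * Real.Gamma K / π with hA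
        have hApos : 0 < A :=
          div_pos (mul_pos (Real.exp_pos _) (Real.Gamma_pos_of_pos (by linarith))) Real.pi_pos
        have hbound : ∀ m : ℕ, ‖(Complex.Gamma (b + (β:ℂ) * m))⁻¹‖
            ≤ (A * δ⁻¹ ^ N) * (δ⁻¹ ^ B) ^ m := by
          intro m
          set n : ℕ := N + ⌈β * m⌉₊ with hn
          set w : ℂ := b + (β:ℂ) * m - n with hw
          have hwim : w.im = b.im := by simp [hw]
          have hwim' : w.im ≠ 0 := by rw [hwim]; exact hbim
          have hwre : w.re = b.re + β * m - n := by simp [hw]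
          have hceil1 : β * m ≤ (⌈β * m⌉₊ : ℝ) := Nat.le_ceil _
          have hceil2 : ((⌈β * m⌉₊ : ℕ) : ℝ) < β * m + 1 := Nat.ceil_lt_add_one (by positivity)
          have hre_le : w.re ≤ -1 := by
            have h3 : b.re ≤ (⌈b.re⌉₊ : ℝ) := Nat.le_ceil _
            rw [hwre, hn, hN]; push_cast; linarith
          have hre_lt0 : w.re < 0 := by linarith
          have hre_gt : 1 - w.re ≤ K := by
            rw [hwre, hn, hK]; push_cast; linarith
          have hΓwinv : ‖(Complex.Gamma w)⁻¹‖ ≤ A := by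
            refine (norm_inv_cGamma_le hre_lt0).trans ?_
            rw [hA, hwim]
            have hmono := Real.Gamma_strictMonoOn_Ici.monotoneOn
              (Set.mem_Ici.2 (by linarith : (2:ℝ) ≤ 1 - w.re)) (Set.mem_Ici.2 hK2) hre_gt
            exact div_le_div_of_nonneg_right
              (mul_le_mul_of_nonneg_left hmono (Real.exp_pos _).le) Real.pi_pos.le
          have hΓw_ne : Complex.Gamma w ≠ 0 := by
            apply Complex.Gamma_ne_zero
            intro k hk
            apply hwim'
            rw [hk]
            simp
          have h0 : 0 < ‖Complex.Gamma w‖ := norm_pos_iff.2 hΓw_ne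
          have hΓw_lb : A⁻¹ ≤ ‖Complex.Gamma w‖ := by
            rw [norm_inv] at hΓwinv
            exact inv_le_of_inv_le₀ h0 hΓwinv
          have hzeq : b + (β:ℂ) * m = w + n := by rw [hw]; ring
          have hΓz : Complex.Gamma (b + (β:ℂ) * m)
              = Complex.Gamma w * ∏ k ∈ Finset.range n, (w + k) := by
            rw [hzeq]; exact cGamma_add_nat w hwim' n
          have hprod : δ ^ n ≤ ‖∏ k ∈ Finset.range n, (w + (k:ℂ))‖ := by
            rw [norm_prod,
              show δ ^ n = ∏ _k ∈ Finset.range n, δ by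
                rw [Finset.prod_const, Finset.card_range]]
            refine Finset.prod_le_prod (fun i _ => hδ0.le) (fun i _ => ?_)
            calc δ ≤ |b.im| := min_le_left _ _
              _ = |(w + (i:ℂ)).im| := by simp [hwim]
              _ ≤ ‖w + (i:ℂ)‖ := Complex.abs_im_le_norm _
          have hnorm_z : A⁻¹ * δ ^ n ≤ ‖Complex.Gamma (b + (β:ℂ) * m)‖ := by
            rw [hΓz, norm_mul]
            exact mul_le_mul hΓw_lb hprod (by positivity) (norm_nonneg _)
          have hpos_z : 0 < A⁻¹ * δ ^ n := by positivity
          rw [norm_inv]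
          refine (inv_anti₀ hpos_z hnorm_z).trans ?_
          rw [mul_inv, inv_inv, ← inv_pow]
          have hn_le : n ≤ N + B * m := by
            have hbB : β ≤ (B:ℝ) := Nat.le_ceil _
            have : ⌈β * m⌉₊ ≤ B * m := by
              apply Nat.ceil_le.2
              push_cast
              exact mul_le_mul_of_nonneg_right hbB (Nat.cast_nonneg m)
            omega
          calc A * δ⁻¹ ^ n ≤ A * δ⁻¹ ^ (N + B * m) := by
                gcongr
            _ = A * δ⁻¹ ^ N * (δ⁻¹ ^ B) ^ m := by rw [pow_add, ← pow_mul, mul_assoc]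
        apply Summable.of_nonneg_of_le hfnonneg (fun m => ?_)
          (((Real.summable_pow_div_factorial (‖lam‖ * δ⁻¹ ^ B)).mul_left (A * δ⁻¹ ^ N)))
        calc ‖lam‖ ^ m / (Nat.factorial m : ℝ) * ‖(Complex.Gamma (b + (β:ℂ) * m))⁻¹‖
            ≤ ‖lam‖ ^ m / (Nat.factorial m : ℝ) * ((A * δ⁻¹ ^ N) * (δ⁻¹ ^ B) ^ m) := by
              gcongr
              exact hbound m
          _ = (A * δ⁻¹ ^ N) * ((‖lam‖ * δ⁻¹ ^ B) ^ m / (Nat.factorial m : ℝ)) := by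
              rw [mul_pow]; ring
end
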